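/- arXiv:1510.03912 — 2 statements merged into one kernel-verified Lean document; each statement's English description precedes it below -/
import Mathlib

section
/- For n ≥ k^2 ≥ 4, m(n+1,k,1) = m(n,k,1) + binom(n,k). -/
/-- `V n k l` : vectors in `{0,±1}^n` with exactly `k` coordinates `+1` and
exactly `l` coordinates `-1`. -/
def V (n k l : ℕ) : Set (Fin n → ℤ) :=
  {v | (∀ i, v i = 0 ∨ v i = 1 ∨ v i = -1) ∧
       (Finset.univ.filter fun i => v i = 1).card = k ∧
       (Finset.univ.filter fun i => v i = -1).card = l}

/-- scalar product -/
def dot {n : ℕ} (v w : Fin n → ℤ) : ℤ := ∑ i, v i * w i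

/-- the set of sizes of intersecting subfamilies of `V n k 1`. -/
def interSizes (n k : ℕ) : Set ℕ :=
  {s | ∃ F : Set (Fin n → ℤ), F ⊆ V n k 1 ∧
      (∀ v ∈ F, ∀ w ∈ F, dot v w ≠ -2) ∧ F.ncard = s}

open Finset

namespace Aux18

variable {N k n : ℕ}

def Pos {N : ℕ} (v : Fin N → ℤ) : Finset (Fin N) := univ.filter (fun i => v i = 1)
def Neg {N : ℕ} (v : Fin N → ℤ) : Finset (Fin N) := univ.filter (fun i => v i = -1)

variable {N k : ℕ}

lemma mem_Pos {v : Fin N → ℤ} {i : Fin N} : i ∈ Pos v ↔ v i = 1 := by simp [Pos]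
lemma mem_Neg {v : Fin N → ℤ} {i : Fin N} : i ∈ Neg v ↔ v i = -1 := by simp [Neg]

lemma card_Pos {v : Fin N → ℤ} (hv : v ∈ V N k 1) : (Pos v).card = k := hv.2.1
lemma card_Neg {v : Fin N → ℤ} (hv : v ∈ V N k 1) : (Neg v).card = 1 := hv.2.2

lemma exists_neg {v : Fin N → ℤ} (hv : v ∈ V N k 1) : ∃ a, Neg v = {a} :=
  Finset.card_eq_one.1 (card_Neg hv)

lemma eq_of_pos_neg {v w : Fin N → ℤ} (hv : v ∈ V N k 1) (hw : w ∈ V N k 1)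
    (hp : Pos v = Pos w) (hn : Neg v = Neg w) : v = w := by
  funext i
  rcases hv.1 i with h0 | h1 | h2
  · rcases hw.1 i with g0 | g1 | g2
    · rw [h0, g0]
    · exfalso; have : i ∈ Pos w := mem_Pos.2 g1
      rw [← hp] at this; rw [mem_Pos.1 this] at h0; norm_num at h0
    · exfalso; have : i ∈ Neg w := mem_Neg.2 g2
      rw [← hn] at this; rw [mem_Neg.1 this] at h0; norm_num at h0
  · have : i ∈ Pos w := hp ▸ mem_Pos.2 h1
    rw [h1, mem_Pos.1 this]
  · have : i ∈ Neg w := hn ▸ mem_Neg.2 h2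
    rw [h2, mem_Neg.1 this]

lemma card_inter_singleton (s : Finset (Fin N)) (a : Fin N) :
    (s ∩ {a}).card = if a ∈ s then 1 else 0 := by
  split_ifs with h
  · rw [Finset.inter_singleton_of_mem h, Finset.card_singleton]
  · rw [Finset.inter_singleton_of_notMem h, Finset.card_empty]

lemma univ_filter_mem (s : Finset (Fin N)) : univ.filter (· ∈ s) = s := by
  ext i; simp

lemma sum_indicator (s : Finset (Fin N)) :
    (∑ i, (if i ∈ s then (1:ℤ) else 0)) = s.card := by
  rw [Finset.sum_ite_mem]
  simp

lemma dot_eq {v w : Fin N → ℤ} (hv : ∀ i, v i = 0 ∨ v i = 1 ∨ v i = -1)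
    (hw : ∀ i, w i = 0 ∨ w i = 1 ∨ w i = -1) :
    dot v w = ((Pos v ∩ Pos w).card : ℤ) - ((Pos v ∩ Neg w).card : ℤ)
      - ((Neg v ∩ Pos w).card : ℤ) + ((Neg v ∩ Neg w).card : ℤ) := by
  have key : ∀ i, v i * w i =
      (if i ∈ Pos v ∩ Pos w then (1:ℤ) else 0) - (if i ∈ Pos v ∩ Neg w then (1:ℤ) else 0)
      - (if i ∈ Neg v ∩ Pos w then (1:ℤ) else 0) + (if i ∈ Neg v ∩ Neg w then (1:ℤ) else 0) := by
    intro i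
    rcases hv i with h | h | h <;> rcases hw i with g | g | g <;>
      simp [Finset.mem_inter, mem_Pos, mem_Neg, h, g] <;> norm_num
  unfold dot
  rw [Finset.sum_congr rfl (fun i _ => key i)]
  rw [Finset.sum_add_distrib, Finset.sum_sub_distrib, Finset.sum_sub_distrib,
    sum_indicator, sum_indicator, sum_indicator, sum_indicator]


lemma dot_comm (v w : Fin N → ℤ) : dot v w = dot w v := by
  unfold dot; exact Finset.sum_congr rfl fun i _ => mul_comm _ _

lemma dot_expand {v w : Fin N → ℤ} (hv : v ∈ V N k 1) (hw : w ∈ V N k 1)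
    {a b : Fin N} (ha : Neg v = {a}) (hb : Neg w = {b}) :
    dot v w = ((Pos v ∩ Pos w).card : ℤ) - (if b ∈ Pos v then 1 else 0)
      - (if a ∈ Pos w then 1 else 0) + (if a = b then 1 else 0) := by
  have e2 : (({a} : Finset (Fin N)) ∩ Pos w).card = if a ∈ Pos w then 1 else 0 := by
    rw [Finset.inter_comm, card_inter_singleton]
  have e3 : (({a} : Finset (Fin N)) ∩ {b}).card = if a = b then 1 else 0 := by
    rw [card_inter_singleton]; simp [eq_comm]
  rw [dot_eq hv.1 hw.1, ha, hb, card_inter_singleton, e2, e3]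
  push_cast
  split_ifs <;> ring

lemma dot_ge {v w : Fin N → ℤ} (hv : v ∈ V N k 1) (hw : w ∈ V N k 1) :
    -2 ≤ dot v w := by
  obtain ⟨a, ha⟩ := Finset.card_eq_one.1 hv.2.2
  obtain ⟨b, hb⟩ := Finset.card_eq_one.1 hw.2.2
  rw [dot_expand hv hw ha hb]
  have h1 : (0:ℤ) ≤ ((Pos v ∩ Pos w).card : ℤ) := by positivity
  split_ifs <;> omega

lemma dot_neg_two_iff {v w : Fin N → ℤ} (hv : v ∈ V N k 1) (hw : w ∈ V N k 1)
    {a b : Fin N} (ha : Neg v = {a}) (hb : Neg w = {b}) :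
    dot v w = -2 ↔ (Pos v ∩ Pos w = ∅ ∧ a ∈ Pos w ∧ b ∈ Pos v) := by
  have hav : v a = -1 := mem_Neg.1 (ha ▸ Finset.mem_singleton_self a)
  have hbw : w b = -1 := mem_Neg.1 (hb ▸ Finset.mem_singleton_self b)
  rw [dot_expand hv hw ha hb]
  constructor
  · intro h
    have h1 : (0:ℤ) ≤ ((Pos v ∩ Pos w).card : ℤ) := by positivity
    by_cases hab : a = b
    · exfalso
      have h3 : a ∉ Pos w := by rw [hab, mem_Pos]; omega
      have h4 : b ∉ Pos v := by rw [← hab, mem_Pos]; omega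
      rw [if_neg h4, if_neg h3, if_pos hab] at h
      omega
    · have h2 : a ∈ Pos w ∧ b ∈ Pos v ∧ ((Pos v ∩ Pos w).card : ℤ) = 0 := by
        rw [if_neg hab] at h
        by_cases hb1 : b ∈ Pos v <;> by_cases hb2 : a ∈ Pos w <;>
          [skip; exfalso; exfalso; exfalso] <;>
          simp only [if_pos, if_neg, hb1, hb2, if_true, if_false] at h <;>
          [exact ⟨hb2, hb1, by omega⟩; omega; omega; omega]
      refine ⟨?_, h2.1, h2.2.1⟩
      rw [← Finset.card_eq_zero]; exact_mod_cast h2.2.2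
  · rintro ⟨h0, h1, h2⟩
    have hab : a ≠ b := by
      intro e; subst e; rw [mem_Pos] at h1; omega
    rw [h0]
    simp [h1, h2, hab]


lemma comp_mem_V (e : Equiv.Perm (Fin N)) {v : Fin N → ℤ} (hv : v ∈ V N k 1) :
    (v ∘ e) ∈ V N k 1 := by
  have hc : ∀ c : ℤ, (univ.filter fun i => v (e i) = c).card
      = (univ.filter fun j => v j = c).card := by
    intro c
    apply Finset.card_bij (fun i _ => e i)
    · intro a ha; simp only [Finset.mem_filter, Finset.mem_univ, true_and] at ha ⊢; exact ha
    · intro a _ b _ h; exact e.injective h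
    · intro b hb
      refine ⟨e.symm b, ?_, e.apply_symm_apply b⟩
      simp only [Finset.mem_filter, Finset.mem_univ, true_and, e.apply_symm_apply] at hb ⊢
      exact hb
  exact ⟨fun i => hv.1 (e i), by rw [← hv.2.1]; exact hc 1, by rw [← hv.2.2]; exact hc (-1)⟩

lemma dot_comp_comp (e : Equiv.Perm (Fin N)) (v w : Fin N → ℤ) :
    dot (v ∘ e) (w ∘ e) = dot v w :=
  Equiv.sum_comp e (fun i => v i * w i)

lemma dot_comp_left (e : Equiv.Perm (Fin N)) (v w : Fin N → ℤ) :
    dot (v ∘ e) w = dot v (w ∘ e.symm) := by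
  exact Fintype.sum_equiv e _ _ (fun i => by simp)

lemma dot_swap_left (x y : Fin N) (v w : Fin N → ℤ) :
    dot (v ∘ Equiv.swap x y) w = dot v (w ∘ Equiv.swap x y) := by
  rw [dot_comp_left, Equiv.symm_swap]

lemma dot_swap_diff (x y : Fin N) (hxy : x ≠ y) (v w : Fin N → ℤ) :
    dot (v ∘ Equiv.swap x y) w = dot v w + (v y - v x) * (w x - w y) := by
  have key : ∀ i, v (Equiv.swap x y i) * w i - v i * w i =
      (if i = x then (v y - v x) * w x else 0) + (if i = y then (v x - v y) * w y else 0) := by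
    intro i
    rcases eq_or_ne i x with rfl | hix
    · rw [Equiv.swap_apply_left, if_pos rfl, if_neg hxy]; ring
    · rcases eq_or_ne i y with rfl | hiy
      · rw [Equiv.swap_apply_right, if_neg hix, if_pos rfl]; ring
      · rw [Equiv.swap_apply_of_ne_of_ne hix hiy, if_neg hix, if_neg hiy]; ring
  have hsum : dot (v ∘ Equiv.swap x y) w - dot v w = (v y - v x) * w x + (v x - v y) * w y := by
    unfold dot
    rw [← Finset.sum_sub_distrib]
    simp only [Function.comp_apply]
    rw [Finset.sum_congr rfl (fun i _ => key i), Finset.sum_add_distrib,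
      Finset.sum_ite_eq' univ x, Finset.sum_ite_eq' univ y]
    simp
  have expand : (v y - v x) * (w x - w y) = (v y - v x) * w x + (v x - v y) * w y := by ring
  rw [expand]
  linarith [hsum]

/-- weight for the termination of shifting -/
def wgt {N : ℕ} (v : Fin N → ℤ) : ℕ := ∑ i, i.val * (v i + 1).toNat

def phi {N : ℕ} (F : Finset (Fin N → ℤ)) : ℕ := ∑ v ∈ F, wgt v

def stab (F : Finset (Fin (n+1) → ℤ)) : Prop :=
  ∀ v ∈ F, ∀ x : Fin (n+1), v x < v (Fin.last n) → (v ∘ Equiv.swap x (Fin.last n)) ∈ F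

lemma comp_swap_invol (x y : Fin N) (v : Fin N → ℤ) :
    (v ∘ Equiv.swap x y) ∘ Equiv.swap x y = v := by
  funext i; simp [Function.comp, Equiv.swap_apply_self]

lemma wgt_swap_lt {v : Fin (n+1) → ℤ} (hv : v ∈ V (n+1) k 1) {x : Fin (n+1)}
    (hq : v x < v (Fin.last n)) : wgt (v ∘ Equiv.swap x (Fin.last n)) < wgt v := by
  set ℓ := Fin.last n with hℓ
  have hxl : x ≠ ℓ := fun h => by rw [h] at hq; exact lt_irrefl _ hq
  have hxv : x.val < ℓ.val := by
    rw [hℓ]; exact Fin.val_lt_last hxl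
  set e := Equiv.swap x ℓ with he
  have h1 : wgt (v ∘ e) = ∑ j, (e j).val * (v j + 1).toNat := by
    unfold wgt
    apply Fintype.sum_equiv e
    intro i
    simp only [Function.comp_apply]
    rw [Equiv.swap_apply_self]
  have key : ∀ j, ((e j).val * (v j + 1).toNat : ℤ) - (j.val * (v j + 1).toNat : ℤ) =
      (if j = x then ((ℓ.val : ℤ) - x.val) * (v x + 1).toNat else 0)
      + (if j = ℓ then ((x.val : ℤ) - ℓ.val) * (v ℓ + 1).toNat else 0) := by
    intro j
    rcases eq_or_ne j x with rfl | hjx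
    · rw [he, Equiv.swap_apply_left, if_pos rfl, if_neg hxl]; push_cast; ring
    · rcases eq_or_ne j ℓ with rfl | hjl
      · rw [he, Equiv.swap_apply_right, if_neg hjx, if_pos rfl]; push_cast; ring
      · rw [he, Equiv.swap_apply_of_ne_of_ne hjx hjl, if_neg hjx, if_neg hjl]; ring
  have hsum : (wgt (v ∘ e) : ℤ) - (wgt v : ℤ) =
      ((ℓ.val : ℤ) - x.val) * (v x + 1).toNat + ((x.val : ℤ) - ℓ.val) * (v ℓ + 1).toNat := by
    rw [h1]; unfold wgt
    push_cast
    rw [← Finset.sum_sub_distrib]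
    rw [Finset.sum_congr rfl (fun j _ => key j), Finset.sum_add_distrib,
      Finset.sum_ite_eq' univ x, Finset.sum_ite_eq' univ ℓ]
    simp
  have htn : (v x + 1).toNat < (v ℓ + 1).toNat := by
    rcases hv.1 x with h | h | h <;> rcases hv.1 ℓ with g | g | g <;> omega
  have hlt : (wgt (v ∘ e) : ℤ) < (wgt v : ℤ) := by nlinarith [hsum, htn, hxv]
  exact_mod_cast hlt

lemma shift_step (F : Finset (Fin (n+1) → ℤ)) (hFV : ∀ v ∈ F, v ∈ V (n+1) k 1)
    (hFi : ∀ v ∈ F, ∀ w ∈ F, dot v w ≠ -2)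
    (x₀ : Fin (n+1)) (v₀ : Fin (n+1) → ℤ) (hv₀ : v₀ ∈ F)
    (hq0 : v₀ x₀ < v₀ (Fin.last n)) (ht0 : (v₀ ∘ Equiv.swap x₀ (Fin.last n)) ∉ F) :
    ∃ F' : Finset (Fin (n+1) → ℤ), (∀ v ∈ F', v ∈ V (n+1) k 1) ∧
      (∀ v ∈ F', ∀ w ∈ F', dot v w ≠ -2) ∧ F'.card = F.card ∧ phi F' < phi F := by
  classical
  set ℓ := Fin.last n with hℓ
  set e := Equiv.swap x₀ ℓ with he
  set g : (Fin (n+1) → ℤ) → (Fin (n+1) → ℤ) :=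
    fun v => if v x₀ < v ℓ ∧ (v ∘ e) ∉ F then v ∘ e else v with hg
  have hginj : ∀ u ∈ F, ∀ v ∈ F, g u = g v → u = v := by
    intro u hu v hv huv
    rw [hg] at huv; simp only at huv
    split_ifs at huv with c1 c2 c2
    · have : (u ∘ e) ∘ e = (v ∘ e) ∘ e := by rw [huv]
      rwa [comp_swap_invol, comp_swap_invol] at this
    · exact absurd (huv ▸ hv) c1.2
    · exact absurd (huv ▸ hu) c2.2
    · exact huv
  refine ⟨F.image g, ?_, ?_, ?_, ?_⟩
  · intro v hv
    obtain ⟨u, hu, rfl⟩ := Finset.mem_image.1 hv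
    rw [hg]; simp only
    split_ifs
    · exact comp_mem_V e (hFV u hu)
    · exact hFV u hu
  · intro v hv w hw
    obtain ⟨p, hp, rfl⟩ := Finset.mem_image.1 hv
    obtain ⟨q, hq, rfl⟩ := Finset.mem_image.1 hw
    have main : ∀ p₁ ∈ F, ∀ p₂ ∈ F, (p₁ x₀ < p₁ ℓ ∧ (p₁ ∘ e) ∉ F) →
        ¬(p₂ x₀ < p₂ ℓ ∧ (p₂ ∘ e) ∉ F) → dot (p₁ ∘ e) p₂ ≠ -2 := by
      intro p₁ h1 p₂ h2 hc1 hn2 hdot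
      by_cases q2 : p₂ x₀ < p₂ ℓ
      · have ht2 : (p₂ ∘ e) ∈ F := by
          by_contra hcon; exact hn2 ⟨q2, hcon⟩
        have : dot p₁ (p₂ ∘ e) = -2 := by rw [← hdot, he, dot_swap_left]
        exact hFi p₁ h1 _ ht2 this
      · have hxl : x₀ ≠ ℓ := fun h => by rw [h] at hc1; exact lt_irrefl _ hc1.1
        have hd := dot_swap_diff x₀ ℓ hxl p₁ p₂
        rw [← he] at hd
        have hge := dot_ge (k := k) (hFV p₁ h1) (hFV p₂ h2)
        have hne := hFi p₁ h1 p₂ h2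
        have hc : (0:ℤ) ≤ (p₁ ℓ - p₁ x₀) * (p₂ x₀ - p₂ ℓ) :=
          mul_nonneg (by linarith [hc1.1]) (by linarith [not_lt.1 q2])
        rw [hdot] at hd
        have : dot p₁ p₂ = -2 := by linarith
        exact hne this
    rw [hg]; simp only
    split_ifs with c1 c2 c2
    · rw [he, dot_comp_comp]; exact hFi p hp q hq
    · exact main p hp q hq c1 c2
    · rw [dot_comm]; exact main q hq p hp c2 c1
    · exact hFi p hp q hq
  · exact Finset.card_image_of_injOn hginj
  · unfold phi
    rw [Finset.sum_image hginj]
    apply Finset.sum_lt_sum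
    · intro v hv
      rw [hg]; simp only
      split_ifs with c
      · exact le_of_lt (wgt_swap_lt (hFV v hv) c.1)
      · exact le_refl _
    · refine ⟨v₀, hv₀, ?_⟩
      rw [hg]; simp only
      rw [if_pos ⟨hq0, ht0⟩]
      exact wgt_swap_lt (hFV v₀ hv₀) hq0

lemma exists_stable (m : ℕ) : ∀ F : Finset (Fin (n+1) → ℤ),
    phi F ≤ m → (∀ v ∈ F, v ∈ V (n+1) k 1) → (∀ v ∈ F, ∀ w ∈ F, dot v w ≠ -2) →
    ∃ F' : Finset (Fin (n+1) → ℤ), (∀ v ∈ F', v ∈ V (n+1) k 1) ∧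
      (∀ v ∈ F', ∀ w ∈ F', dot v w ≠ -2) ∧ F'.card = F.card ∧ stab F' := by
  induction m with
  | zero =>
    intro F hphi hFV hFi
    by_cases hs : stab F
    · exact ⟨F, hFV, hFi, rfl, hs⟩
    · exfalso
      unfold stab at hs
      push_neg at hs
      obtain ⟨v₀, hv₀, x₀, hq0, ht0⟩ := hs
      obtain ⟨F', _, _, _, hlt⟩ := shift_step (k := k) F hFV hFi x₀ v₀ hv₀ hq0 ht0
      omega
  | succ m ih =>
    intro F hphi hFV hFi
    by_cases hs : stab F
    · exact ⟨F, hFV, hFi, rfl, hs⟩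
    · unfold stab at hs
      push_neg at hs
      obtain ⟨v₀, hv₀, x₀, hq0, ht0⟩ := hs
      obtain ⟨F', hV', hi', hcard', hlt⟩ := shift_step (k := k) F hFV hFi x₀ v₀ hv₀ hq0 ht0
      obtain ⟨F'', h1, h2, h3, h4⟩ := ih F' (by omega) hV' hi'
      exact ⟨F'', h1, h2, by omega, h4⟩

lemma ekr {α : Type*} [Fintype α] [DecidableEq α] {𝒜 : Finset (Finset α)} {r : ℕ}
    (hint : ∀ A ∈ 𝒜, ∀ B ∈ 𝒜, ¬Disjoint A B) (hsz : ∀ A ∈ 𝒜, A.card = r)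
    (hr : 2 * r ≤ Fintype.card α) : 𝒜.card ≤ (Fintype.card α - 1).choose (r - 1) := by
  classical
  set e := Fintype.equivFin α with he
  set 𝒜' : Finset (Finset (Fin (Fintype.card α))) := 𝒜.image (Finset.image e) with h𝒜'
  have hinj : Function.Injective (Finset.image (e : α → Fin (Fintype.card α))) :=
    Finset.image_injective e.injective
  have hcard : 𝒜'.card = 𝒜.card := Finset.card_image_of_injective _ hinj
  have h1 : (𝒜' : Set (Finset (Fin (Fintype.card α)))).Intersecting := by
    intro A hA B hB
    simp only [h𝒜', coe_image, Set.mem_image, mem_coe] at hA hB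
    obtain ⟨A₀, hA₀, rfl⟩ := hA
    obtain ⟨B₀, hB₀, rfl⟩ := hB
    have := hint A₀ hA₀ B₀ hB₀
    rw [Finset.not_disjoint_iff] at this ⊢
    obtain ⟨x, hx1, hx2⟩ := this
    exact ⟨e x, Finset.mem_image_of_mem _ hx1, Finset.mem_image_of_mem _ hx2⟩
  have h2 : (𝒜' : Set (Finset (Fin (Fintype.card α)))).Sized r := by
    intro A hA
    simp only [h𝒜', coe_image, Set.mem_image, mem_coe] at hA
    obtain ⟨A₀, hA₀, rfl⟩ := hA
    rw [Finset.card_image_of_injective _ e.injective]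
    exact hsz A₀ hA₀
  have h3 : r ≤ Fintype.card α / 2 := Nat.le_div_iff_mul_le (by norm_num) |>.2 (by omega)
  have := Finset.erdos_ko_rado h1 h2 h3
  omega

lemma core {α : Type*} [Fintype α] [DecidableEq α] {k : ℕ} (hk : 2 ≤ k)
    (hn : k ^ 2 ≤ Fintype.card α) (P : Finset (Finset α × α)) (D : Finset (Finset α))
    (hP1 : ∀ p ∈ P, p.1.card = k - 1) (hP2 : ∀ p ∈ P, p.2 ∉ p.1)
    (hPint : ∀ p ∈ P, ∀ q ∈ P, ¬Disjoint p.1 q.1)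
    (hD : ∀ B ∈ D, B.card = k)
    (hPD : ∀ p ∈ P, ∀ B ∈ D, p.2 ∈ B → ¬Disjoint p.1 B) :
    D.card + P.card ≤ (Fintype.card α).choose k := by
  classical
  set N := Fintype.card α with hN
  have hn' : k * k ≤ N := by rw [← pow_two]; exact hn
  have ekk : k * k = k * (k-1) + k := by
    calc k * k = k * ((k-1) + 1) := by congr 1; omega
      _ = k * (k-1) + k := by rw [mul_add, mul_one]
  have fact3 : k * (k - 1) ≤ N - k := by omega
  have fact2 : 2 * (k - 1) ≤ N - k :=
    le_trans (Nat.mul_le_mul_right _ hk) fact3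
  have fact1 : k - 1 ≤ N - k := le_trans (by omega) fact2
  set U : Finset (Finset α) :=
    (Finset.powersetCard k (univ : Finset α)).filter
      (fun B => ∃ p ∈ P, p.2 ∈ B ∧ Disjoint p.1 B) with hU
  -- step A
  have hDU : Disjoint D U := by
    rw [Finset.disjoint_left]
    intro B hBD hBU
    rw [hU, Finset.mem_filter] at hBU
    obtain ⟨-, p, hp, h2, h3⟩ := hBU
    exact hPD p hp B hBD h2 h3
  have hDsub : D ∪ U ⊆ Finset.powersetCard k (univ : Finset α) :=
    Finset.union_subset
      (fun B hB => Finset.mem_powersetCard_univ.2 (hD B hB))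
      (Finset.filter_subset _ _)
  have stepA : D.card + U.card ≤ N.choose k := by
    rw [← Finset.card_union_of_disjoint hDU]
    calc (D ∪ U).card ≤ (Finset.powersetCard k (univ : Finset α)).card :=
          Finset.card_le_card hDsub
      _ = N.choose k := by rw [Finset.card_powersetCard, Finset.card_univ]
  -- step B : P.card ≤ U.card
  set c := (N - k).choose (k - 1) with hc
  have hcpos : 0 < c := Nat.choose_pos fact1
  have rows : ∀ p ∈ P, c ≤ (U.filter fun B => p.2 ∈ B ∧ Disjoint p.1 B).card := by
    intro p hp
    have hins : (insert p.2 p.1).card = k := by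
      rw [Finset.card_insert_of_notMem (hP2 p hp), hP1 p hp]; omega
    have hground : ((univ : Finset α) \ insert p.2 p.1).card = N - k := by
      rw [Finset.card_sdiff_of_subset (Finset.subset_univ _), Finset.card_univ, hins]
    have := Finset.card_le_card_of_injOn
      (s := Finset.powersetCard (k-1) ((univ : Finset α) \ insert p.2 p.1))
      (t := U.filter fun B => p.2 ∈ B ∧ Disjoint p.1 B)
      (fun E => insert p.2 E) ?_ ?_
    · rwa [Finset.card_powersetCard, hground] at this
    · intro E hE
      rw [Finset.mem_coe, Finset.mem_powersetCard] at hE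
      obtain ⟨hEsub, hEcard⟩ := hE
      have hp2E : p.2 ∉ E := fun h => by
        have := hEsub h; rw [Finset.mem_sdiff] at this
        exact this.2 (Finset.mem_insert_self _ _)
      have hdisj : Disjoint p.1 (insert p.2 E) := by
        rw [Finset.disjoint_right]
        intro x hx
        rcases Finset.mem_insert.1 hx with rfl | hxE
        · exact hP2 p hp
        · have := hEsub hxE; rw [Finset.mem_sdiff] at this
          exact fun hc => this.2 (Finset.mem_insert_of_mem hc)
      have hcardB : (insert p.2 E).card = k := by
        rw [Finset.card_insert_of_notMem hp2E, hEcard]; omega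
      rw [Finset.mem_coe, Finset.mem_filter, hU, Finset.mem_filter]
      exact ⟨⟨Finset.mem_powersetCard_univ.2 hcardB,
        ⟨p, hp, Finset.mem_insert_self _ _, hdisj⟩⟩,
        Finset.mem_insert_self _ _, hdisj⟩
    · intro E hE E' hE' hEE
      rw [Finset.mem_coe, Finset.mem_powersetCard] at hE hE'
      have h1 : p.2 ∉ E := fun h => by
        have := hE.1 h; rw [Finset.mem_sdiff] at this
        exact this.2 (Finset.mem_insert_self _ _)
      have h2 : p.2 ∉ E' := fun h => by
        have := hE'.1 h; rw [Finset.mem_sdiff] at this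
        exact this.2 (Finset.mem_insert_self _ _)
      rw [← Finset.erase_insert h1, ← Finset.erase_insert h2]
      exact congrArg (fun S => S.erase p.2) hEE
  have cols : ∀ B ∈ U, (P.filter fun p => p.2 ∈ B ∧ Disjoint p.1 B).card ≤ c := by
    intro B hBU
    have hBk : B.card = k := by
      rw [hU, Finset.mem_filter] at hBU
      exact Finset.mem_powersetCard_univ.1 hBU.1
    set 𝒜B : Finset (Finset α) := (P.filter fun p => Disjoint p.1 B).image Prod.fst with h𝒜B
    have hcol : (P.filter fun p => p.2 ∈ B ∧ Disjoint p.1 B).card ≤ B.card * 𝒜B.card := by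
      rw [← Finset.card_product]
      apply Finset.card_le_card_of_injOn (fun p => (p.2, p.1))
      · intro p hp
        rw [Finset.mem_coe, Finset.mem_filter] at hp
        rw [Finset.mem_coe, Finset.mem_product]
        refine ⟨hp.2.1, ?_⟩
        rw [h𝒜B]
        exact Finset.mem_image_of_mem _ (Finset.mem_filter.2 ⟨hp.1, hp.2.2⟩)
      · intro p _ q _ hpq
        simp only [Prod.mk.injEq] at hpq
        exact Prod.ext hpq.2 hpq.1
    -- bound 𝒜B via EKR on the subtype
    have h𝒜Bdisj : ∀ A ∈ 𝒜B, Disjoint A B ∧ A.card = k - 1 := by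
      intro A hA
      rw [h𝒜B, Finset.mem_image] at hA
      obtain ⟨p, hp, rfl⟩ := hA
      rw [Finset.mem_filter] at hp
      exact ⟨hp.2, hP1 p hp.1⟩
    have h𝒜Bint : ∀ A ∈ 𝒜B, ∀ A' ∈ 𝒜B, ¬Disjoint A A' := by
      intro A hA A' hA'
      rw [h𝒜B, Finset.mem_image] at hA hA'
      obtain ⟨p, hp, rfl⟩ := hA
      obtain ⟨q, hq, rfl⟩ := hA'
      rw [Finset.mem_filter] at hp hq
      exact hPint p hp.1 q hq.1
    have hsub : 𝒜B.card ≤ (N - k - 1).choose (k - 2) := by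
      set pr : α → Prop := fun x => x ∉ B with hpr
      set ℬ : Finset (Finset {x // pr x}) := 𝒜B.image (Finset.subtype pr) with hℬ
      have hrecover : ∀ A ∈ 𝒜B, (A.subtype pr).map (Function.Embedding.subtype pr) = A := by
        intro A hA
        rw [Finset.subtype_map]
        apply Finset.filter_true_of_mem
        intro x hx
        rw [hpr]
        exact Finset.disjoint_left.1 (h𝒜Bdisj A hA).1 hx
      have hcardsub : Fintype.card {x // pr x} = N - k := by
        rw [Fintype.card_subtype]
        have : (univ : Finset α).filter pr = univ \ B := by
          ext x; simp [hpr]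
        rw [this, Finset.card_sdiff_of_subset (Finset.subset_univ _), Finset.card_univ, hBk]
      have hBcard : ℬ.card = 𝒜B.card := by
        apply Finset.card_image_of_injOn
        intro A hA A' hA' hAA
        rw [← hrecover A hA, ← hrecover A' hA', hAA]
      have hekr := ekr (𝒜 := ℬ) (r := k - 1) ?_ ?_ ?_
      · rw [hBcard, hcardsub] at hekr
        have : k - 1 - 1 = k - 2 := by omega
        rwa [this] at hekr
      · intro A hA A' hA'
        rw [hℬ, Finset.mem_image] at hA hA'
        obtain ⟨A₀, hA₀, rfl⟩ := hA
        obtain ⟨A₀', hA₀', rfl⟩ := hA'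
        have := h𝒜Bint A₀ hA₀ A₀' hA₀'
        rw [Finset.not_disjoint_iff] at this ⊢
        obtain ⟨x, hx1, hx2⟩ := this
        have hxB : pr x := Finset.disjoint_left.1 (h𝒜Bdisj A₀ hA₀).1 hx1
        exact ⟨⟨x, hxB⟩, Finset.mem_subtype.2 hx1, Finset.mem_subtype.2 hx2⟩
      · intro A hA
        rw [hℬ, Finset.mem_image] at hA
        obtain ⟨A₀, hA₀, rfl⟩ := hA
        rw [Finset.card_subtype]
        have : A₀.filter pr = A₀ := by
          apply Finset.filter_true_of_mem
          intro x hx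
          exact Finset.disjoint_left.1 (h𝒜Bdisj A₀ hA₀).1 hx
        rw [this]
        exact (h𝒜Bdisj A₀ hA₀).2
      · rw [hcardsub]; exact fact2
    -- arithmetic: k * (N-k-1).choose (k-2) ≤ c
    have harith : k * (N - k - 1).choose (k - 2) ≤ c := by
      have hM1 : 1 ≤ N - k := by omega
      have hid : (N - k) * (N - k - 1).choose (k - 2) = c * (k - 1) := by
        have := Nat.add_one_mul_choose_eq (N - k - 1) (k - 2)
        have e1 : N - k - 1 + 1 = N - k := by omega
        have e2 : k - 2 + 1 = k - 1 := by omega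
        rw [e1, e2] at this
        rw [this, hc]
      have step : (k - 1) * (k * (N - k - 1).choose (k - 2)) ≤ (k - 1) * c := by
        have l1 : (k * (k-1)) * (N - k - 1).choose (k - 2)
            ≤ (N - k) * (N - k - 1).choose (k - 2) :=
          Nat.mul_le_mul_right _ fact3
        calc (k - 1) * (k * (N - k - 1).choose (k - 2))
            = (k * (k-1)) * (N - k - 1).choose (k - 2) := by ring
          _ ≤ (N - k) * (N - k - 1).choose (k - 2) := l1
          _ = c * (k - 1) := hid
          _ = (k - 1) * c := by ring
      exact Nat.le_of_mul_le_mul_left step (by omega)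
    calc (P.filter fun p => p.2 ∈ B ∧ Disjoint p.1 B).card
        ≤ B.card * 𝒜B.card := hcol
      _ ≤ k * (N - k - 1).choose (k - 2) := by
          rw [hBk]; exact Nat.mul_le_mul_left _ hsub
      _ ≤ c := harith
  -- double counting
  have exch : ∑ p ∈ P, (U.filter fun B => p.2 ∈ B ∧ Disjoint p.1 B).card
      = ∑ B ∈ U, (P.filter fun p => p.2 ∈ B ∧ Disjoint p.1 B).card := by
    simp_rw [Finset.card_filter]
    exact Finset.sum_comm
  have stepB : P.card ≤ U.card := by
    have l1 : P.card * c ≤ ∑ p ∈ P, (U.filter fun B => p.2 ∈ B ∧ Disjoint p.1 B).card := by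
      calc P.card * c = ∑ _p ∈ P, c := by rw [Finset.sum_const, smul_eq_mul]
        _ ≤ _ := Finset.sum_le_sum rows
    have l2 : ∑ B ∈ U, (P.filter fun p => p.2 ∈ B ∧ Disjoint p.1 B).card ≤ U.card * c := by
      calc ∑ B ∈ U, (P.filter fun p => p.2 ∈ B ∧ Disjoint p.1 B).card
          ≤ ∑ _B ∈ U, c := Finset.sum_le_sum cols
        _ = U.card * c := by rw [Finset.sum_const, smul_eq_mul]
    have : P.card * c ≤ U.card * c := by
      calc P.card * c ≤ _ := l1
        _ = _ := exch
        _ ≤ U.card * c := l2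
    exact Nat.le_of_mul_le_mul_right this hcpos
  omega


lemma Neg_eq_of {v : Fin N → ℤ} (hv : v ∈ V N k 1) {i : Fin N} (h : v i = -1) :
    Neg v = {i} := by
  obtain ⟨a, ha⟩ := exists_neg hv
  have : i ∈ Neg v := mem_Neg.2 h
  rw [ha] at this ⊢
  rw [Finset.mem_singleton] at this
  rw [this]

noncomputable def negEl {n : ℕ} (v : Fin (n+1) → ℤ) : Fin (n+1) :=
  if h : ∃ a, Neg v = {a} then h.choose else 0

lemma negEl_eq {v : Fin (n+1) → ℤ} {a : Fin (n+1)} (ha : Neg v = {a}) : negEl v = a := by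
  have hex : ∃ b, Neg v = {b} := ⟨a, ha⟩
  rw [negEl, dif_pos hex]
  exact (Finset.singleton_injective (ha.symm.trans hex.choose_spec)).symm

lemma mem_image_swap {s : Finset (Fin N)} {x y i : Fin N} :
    i ∈ s.image (Equiv.swap x y) ↔ Equiv.swap x y i ∈ s := by
  rw [Finset.mem_image]
  constructor
  · rintro ⟨j, hj, rfl⟩; rwa [Equiv.swap_apply_self]
  · intro h; exact ⟨_, h, Equiv.swap_apply_self x y i⟩

lemma Pos_comp_swap (x y : Fin N) (v : Fin N → ℤ) :
    Pos (v ∘ Equiv.swap x y) = (Pos v).image (Equiv.swap x y) := by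
  ext i
  rw [mem_image_swap, mem_Pos, mem_Pos, Function.comp_apply]

section Endgame

variable (hk : 2 ≤ k) (hn : k ^ 2 ≤ n)

-- `stab2` : closure property of stable families
lemma stab2 {F : Finset (Fin (n+1) → ℤ)} (hFV : ∀ v ∈ F, v ∈ V (n+1) k 1)
    (hstab : stab F) {w : Fin (n+1) → ℤ} (hw : w ∈ F) (hwl : w (Fin.last n) = 1)
    {y : Fin (n+1)} (hy : y ≠ Fin.last n) (hyP : w y ≠ 1) :
    ∃ u ∈ F, u (Fin.last n) = -1 ∧ Pos u = insert y ((Pos w).erase (Fin.last n)) := by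
  set ℓ := Fin.last n with hℓ
  obtain ⟨b, hb⟩ := exists_neg (hFV w hw)
  have hwb : w b = -1 := mem_Neg.1 (hb ▸ Finset.mem_singleton_self b)
  have hbℓ : b ≠ ℓ := fun h => by rw [h, hwl] at hwb; norm_num at hwb
  by_cases hyb : y = b
  · -- single swap
    subst hyb
    have hq : w y < w ℓ := by rw [hwb, hwl]; norm_num
    have hu : (w ∘ Equiv.swap y ℓ) ∈ F := hstab w hw y hq
    refine ⟨w ∘ Equiv.swap y ℓ, hu, ?_, ?_⟩
    · simp only [Function.comp_apply, Equiv.swap_apply_right]; exact hwb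
    · rw [Pos_comp_swap]
      ext i
      rw [mem_image_swap]
      rcases eq_or_ne i y with rfl | hiy
      · rw [Equiv.swap_apply_left]
        simp only [mem_Pos, hwl, Finset.mem_insert]
        tauto
      · rcases eq_or_ne i ℓ with rfl | hiℓ
        · rw [Equiv.swap_apply_right]
          simp only [mem_Pos, hwb, Finset.mem_insert, Finset.mem_erase]
          constructor
          · intro h; norm_num at h
          · rintro (h | h)
            · exact absurd h hiy
            · exact absurd rfl h.1
        · rw [Equiv.swap_apply_of_ne_of_ne hiy hiℓ]
          simp only [mem_Pos, Finset.mem_insert, Finset.mem_erase]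
          constructor
          · intro h; exact Or.inr ⟨hiℓ, h⟩
          · rintro (h | h)
            · exact absurd h hiy
            · exact h.2
  · -- two swaps
    have hwy : w y = 0 := by
      rcases (hFV w hw).1 y with h | h | h
      · exact h
      · exact absurd h hyP
      · exfalso; apply hyb
        have : y ∈ Neg w := mem_Neg.2 h
        rw [hb, Finset.mem_singleton] at this; exact this
    have hq1 : w y < w ℓ := by rw [hwy, hwl]; norm_num
    set w₁ := w ∘ Equiv.swap y ℓ with hw₁
    have hu1 : w₁ ∈ F := hstab w hw y hq1
    have hw₁ℓ : w₁ ℓ = 0 := by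
      rw [hw₁]; simp only [Function.comp_apply, Equiv.swap_apply_right]; exact hwy
    have hw₁b : w₁ b = -1 := by
      rw [hw₁]; simp only [Function.comp_apply]
      rw [Equiv.swap_apply_of_ne_of_ne (fun h => hyb h.symm) hbℓ]
      exact hwb
    have hq2 : w₁ b < w₁ ℓ := by rw [hw₁b, hw₁ℓ]; norm_num
    set u := w₁ ∘ Equiv.swap b ℓ with hu
    have huF : u ∈ F := hstab w₁ hu1 b hq2
    refine ⟨u, huF, ?_, ?_⟩
    · rw [hu]; simp only [Function.comp_apply, Equiv.swap_apply_right]; exact hw₁b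
    · have hPw₁ : Pos w₁ = insert y ((Pos w).erase ℓ) := by
        rw [hw₁, Pos_comp_swap]
        ext i
        rw [mem_image_swap]
        rcases eq_or_ne i y with rfl | hiy
        · rw [Equiv.swap_apply_left]
          simp only [mem_Pos, hwl, Finset.mem_insert]; tauto
        · rcases eq_or_ne i ℓ with rfl | hiℓ
          · rw [Equiv.swap_apply_right]
            simp only [mem_Pos, hwy, Finset.mem_insert, Finset.mem_erase]
            constructor
            · intro h; norm_num at h
            · rintro (h | h)
              · exact absurd h hiy
              · exact absurd rfl h.1
          · rw [Equiv.swap_apply_of_ne_of_ne hiy hiℓ]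
            simp only [mem_Pos, Finset.mem_insert, Finset.mem_erase]
            constructor
            · intro h; exact Or.inr ⟨hiℓ, h⟩
            · rintro (h | h)
              · exact absurd h hiy
              · exact h.2
      have hbP : b ∉ Pos w₁ := fun h => by rw [mem_Pos, hw₁b] at h; norm_num at h
      have hℓP : ℓ ∉ Pos w₁ := fun h => by rw [mem_Pos, hw₁ℓ] at h; norm_num at h
      rw [hu, Pos_comp_swap]
      rw [← hPw₁]
      ext i
      rw [mem_image_swap]
      rcases eq_or_ne i b with rfl | hib
      · rw [Equiv.swap_apply_left]; simp [hbP, hℓP]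
      · rcases eq_or_ne i ℓ with rfl | hiℓ
        · rw [Equiv.swap_apply_right]; simp [hbP, hℓP]
        · rw [Equiv.swap_apply_of_ne_of_ne hib hiℓ]

end Endgame

lemma Neg_eq_negEl {v : Fin (n+1) → ℤ} (hv : v ∈ V (n+1) k 1) : Neg v = {negEl v} := by
  obtain ⟨a, ha⟩ := exists_neg hv
  rw [negEl_eq ha]; exact ha

lemma parts_int (hk : 2 ≤ k) (hn : k ^ 2 ≤ n) {F : Finset (Fin (n+1) → ℤ)}
    (hFV : ∀ v ∈ F, v ∈ V (n+1) k 1) (hFi : ∀ v ∈ F, ∀ w ∈ F, dot v w ≠ -2)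
    (hstab : stab F) {v w : Fin (n+1) → ℤ} (hv : v ∈ F) (hw : w ∈ F)
    (hvl : v (Fin.last n) = 1) (hwl : w (Fin.last n) = 1) :
    ∃ x, x ∈ (Pos v).erase (Fin.last n) ∧ x ∈ (Pos w).erase (Fin.last n) := by
  set ℓ := Fin.last n with hℓ
  by_contra hcon
  push_neg at hcon
  have hdisj : ∀ x ∈ (Pos w).erase ℓ, x ∉ Pos v := by
    intro x hx hxv
    exact hcon x (Finset.mem_erase.2 ⟨(Finset.mem_erase.1 hx).1, hxv⟩) hx
  obtain ⟨a, ha⟩ := exists_neg (hFV v hv)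
  have hva : v a = -1 := mem_Neg.1 (ha ▸ Finset.mem_singleton_self a)
  have haℓ : a ≠ ℓ := fun h => by rw [h, hvl] at hva; norm_num at hva
  have hℓv : ℓ ∈ Pos v := mem_Pos.2 hvl
  have haPv : a ∉ Pos v := fun h => by rw [mem_Pos, hva] at h; norm_num at h
  by_cases haw : a ∈ Pos w
  · -- pick z outside Pos v ∪ Pos w
    have hcard : (Pos v ∪ Pos w).card < n + 1 := by
      have h1 : (Pos v ∪ Pos w).card ≤ k + k := by
        calc (Pos v ∪ Pos w).card ≤ (Pos v).card + (Pos w).card := Finset.card_union_le _ _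
          _ = k + k := by rw [card_Pos (hFV v hv), card_Pos (hFV w hw)]
      have h2 : 2 * k ≤ k * k := Nat.mul_le_mul_right k hk
      have h3 : k * k ≤ n := by rw [← pow_two]; exact hn
      omega
    have hz : ∃ z, z ∉ Pos v ∪ Pos w := by
      by_contra hno
      push_neg at hno
      have : (univ : Finset (Fin (n+1))) ⊆ Pos v ∪ Pos w := fun z _ => hno z
      have := Finset.card_le_card this
      rw [Finset.card_univ, Fintype.card_fin] at this
      omega
    obtain ⟨z, hz⟩ := hz
    have hzv : z ∉ Pos v := fun h => hz (Finset.mem_union_left _ h)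
    have hzw : z ∉ Pos w := fun h => hz (Finset.mem_union_right _ h)
    have hzℓ : z ≠ ℓ := fun h => hz (h ▸ Finset.mem_union_left _ hℓv)
    obtain ⟨u, huF, huℓ, hPosu⟩ := stab2 hFV hstab hw hwl hzℓ (fun h1 => hzw (mem_Pos.2 h1))
    have hNu : Neg u = {ℓ} := Neg_eq_of (hFV u huF) huℓ
    apply hFi v hv u huF
    rw [dot_neg_two_iff (hFV v hv) (hFV u huF) ha hNu]
    refine ⟨?_, ?_, hℓv⟩
    · ext x
      simp only [Finset.mem_inter, Finset.notMem_empty, iff_false, not_and]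
      intro hxv hxu
      rw [hPosu] at hxu
      rcases Finset.mem_insert.1 hxu with rfl | hxe
      · exact hzv hxv
      · exact hdisj x hxe hxv
    · rw [hPosu]
      exact Finset.mem_insert_of_mem (Finset.mem_erase.2 ⟨haℓ, haw⟩)
  · obtain ⟨u, huF, huℓ, hPosu⟩ := stab2 hFV hstab hw hwl haℓ (fun h1 => haw (mem_Pos.2 h1))
    have hNu : Neg u = {ℓ} := Neg_eq_of (hFV u huF) huℓ
    apply hFi v hv u huF
    rw [dot_neg_two_iff (hFV v hv) (hFV u huF) ha hNu]
    refine ⟨?_, ?_, hℓv⟩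
    · ext x
      simp only [Finset.mem_inter, Finset.notMem_empty, iff_false, not_and]
      intro hxv hxu
      rw [hPosu] at hxu
      rcases Finset.mem_insert.1 hxu with rfl | hxe
      · exact haPv hxv
      · exact hdisj x hxe hxv
    · rw [hPosu]
      exact Finset.mem_insert_self _ _

lemma stable_count (hk : 2 ≤ k) (hn : k ^ 2 ≤ n) {F : Finset (Fin (n+1) → ℤ)}
    (hFV : ∀ v ∈ F, v ∈ V (n+1) k 1) (hFi : ∀ v ∈ F, ∀ w ∈ F, dot v w ≠ -2)
    (hstab : stab F) :
    ∃ G : Finset (Fin n → ℤ), (∀ v ∈ G, v ∈ V n k 1) ∧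
      (∀ v ∈ G, ∀ w ∈ G, dot v w ≠ -2) ∧ F.card ≤ G.card + n.choose k := by
  classical
  set ℓ := Fin.last n with hℓ
  set F0 := F.filter (fun v => v ℓ = 0) with hF0
  set F1 := F.filter (fun v => v ℓ = 1) with hF1
  set Fm := F.filter (fun v => v ℓ = -1) with hFm
  -- partition
  have hsplit : F.card = F0.card + F1.card + Fm.card := by
    have hunion : F0 ∪ F1 ∪ Fm = F := by
      ext v
      simp only [Finset.mem_union, hF0, hF1, hFm, Finset.mem_filter]
      constructor
      · rintro ((h | h) | h) <;> exact h.1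
      · intro hvF
        rcases (hFV v hvF).1 ℓ with h | h | h
        · exact Or.inl (Or.inl ⟨hvF, h⟩)
        · exact Or.inl (Or.inr ⟨hvF, h⟩)
        · exact Or.inr ⟨hvF, h⟩
    have hd1 : Disjoint F0 F1 := by
      rw [Finset.disjoint_left]
      intro v h1 h2
      rw [hF0, Finset.mem_filter] at h1
      rw [hF1, Finset.mem_filter] at h2
      omega
    have hd2 : Disjoint (F0 ∪ F1) Fm := by
      rw [Finset.disjoint_left]
      intro v h1 h2
      rw [hFm, Finset.mem_filter] at h2
      rcases Finset.mem_union.1 h1 with h | h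
      · rw [hF0, Finset.mem_filter] at h; omega
      · rw [hF1, Finset.mem_filter] at h; omega
    rw [← hunion, Finset.card_union_of_disjoint hd2, Finset.card_union_of_disjoint hd1]
  -- the restriction family G
  set res : (Fin (n+1) → ℤ) → (Fin n → ℤ) := fun v => v ∘ Fin.castSucc with hres
  have hcastcard : ∀ (v : Fin (n+1) → ℤ) (c : ℤ), v ℓ ≠ c →
      (univ.filter fun j : Fin n => v (Fin.castSucc j) = c).card
        = (univ.filter fun i : Fin (n+1) => v i = c).card := by
    intro v c hvc
    apply Finset.card_bij (fun j _ => Fin.castSucc j)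
    · intro j hj
      simp only [Finset.mem_filter, Finset.mem_univ, true_and] at hj ⊢
      exact hj
    · intro j _ j' _ h
      exact Fin.castSucc_injective n h
    · intro i hi
      simp only [Finset.mem_filter, Finset.mem_univ, true_and] at hi
      have hiℓ : i ≠ ℓ := fun h => hvc (h ▸ hi)
      refine ⟨i.castPred hiℓ, ?_, Fin.castSucc_castPred i hiℓ⟩
      simp only [Finset.mem_filter, Finset.mem_univ, true_and,
        Fin.castSucc_castPred]
      exact hi
  set G := F0.image res with hG
  have hresinj : ∀ u ∈ F0, ∀ v ∈ F0, res u = res v → u = v := by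
    intro u hu v hv huv
    rw [hF0, Finset.mem_filter] at hu hv
    funext i
    induction i using Fin.lastCases with
    | last => rw [hu.2, hv.2]
    | cast j => exact congrFun huv j
  have hGcard : G.card = F0.card := Finset.card_image_of_injOn hresinj
  have hGV : ∀ v ∈ G, v ∈ V n k 1 := by
    intro g hg
    obtain ⟨v, hv, rfl⟩ := Finset.mem_image.1 hg
    rw [hF0, Finset.mem_filter] at hv
    have hvV := hFV v hv.1
    refine ⟨fun j => hvV.1 (Fin.castSucc j), ?_, ?_⟩
    · rw [hres]
      have := hcastcard v 1 (by rw [hv.2]; norm_num)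
      simp only [Function.comp]
      rw [this]
      exact hvV.2.1
    · rw [hres]
      have := hcastcard v (-1) (by rw [hv.2]; norm_num)
      simp only [Function.comp]
      rw [this]
      exact hvV.2.2
  have hdotres : ∀ u v : Fin (n+1) → ℤ, u ℓ = 0 →
      dot (res u) (res v) = dot u v := by
    intro u v hu0
    unfold dot
    rw [Fin.sum_univ_castSucc (f := fun i => u i * v i)]
    rw [hres]
    simp only [Function.comp_apply, ← hℓ, hu0, zero_mul, add_zero]
  have hGi : ∀ g ∈ G, ∀ h ∈ G, dot g h ≠ -2 := by
    intro g hg h hh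
    obtain ⟨u, hu, rfl⟩ := Finset.mem_image.1 hg
    obtain ⟨v, hv, rfl⟩ := Finset.mem_image.1 hh
    rw [hF0, Finset.mem_filter] at hu hv
    rw [hdotres u v hu.2]
    exact hFi u hu.1 v hv.1
  -- the core counting for F1 and Fm
  have hcoreapp : F1.card + Fm.card ≤ n.choose k := by
    have hcardα : Fintype.card {i : Fin (n+1) // i ≠ ℓ} = n := by
      rw [Fintype.card_subtype]
      have : (univ : Finset (Fin (n+1))).filter (fun i => i ≠ ℓ) = univ.erase ℓ := by
        ext i; simp [Finset.mem_erase]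
      rw [this, Finset.card_erase_of_mem (Finset.mem_univ _), Finset.card_univ,
        Fintype.card_fin]
      omega
    set down : Finset (Fin (n+1)) → Finset {i : Fin (n+1) // i ≠ ℓ} :=
      fun s => s.subtype (fun i => i ≠ ℓ) with hdown
    -- facts for F1 members
    have hF1mem : ∀ v ∈ F1, v ∈ F ∧ v ℓ = 1 := by
      intro v hv; rw [hF1, Finset.mem_filter] at hv; exact hv
    have hFmmem : ∀ v ∈ Fm, v ∈ F ∧ v ℓ = -1 := by
      intro v hv; rw [hFm, Finset.mem_filter] at hv; exact hv
    have hnegne : ∀ v ∈ F1, negEl v ≠ ℓ := by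
      intro v hv
      obtain ⟨hvF, hvℓ⟩ := hF1mem v hv
      have := Neg_eq_negEl (hFV v hvF)
      have hneg : v (negEl v) = -1 := mem_Neg.1 (this ▸ Finset.mem_singleton_self _)
      intro h
      rw [h, hvℓ] at hneg; norm_num at hneg
    have hdown_erase : ∀ s : Finset (Fin (n+1)),
        (down s).map (Function.Embedding.subtype _) = s.erase ℓ := by
      intro s
      rw [hdown]
      rw [Finset.subtype_map]
      ext i
      rw [Finset.mem_filter, Finset.mem_erase, and_comm]
    have hdowncard : ∀ s : Finset (Fin (n+1)), (down s).card = (s.erase ℓ).card := by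
      intro s
      rw [← hdown_erase s, Finset.card_map]
    set P : Finset (Finset {i : Fin (n+1) // i ≠ ℓ} × {i : Fin (n+1) // i ≠ ℓ}) :=
      F1.attach.image
      (fun vh => (down (Pos vh.1),
        (⟨negEl vh.1, hnegne vh.1 vh.2⟩ : {i : Fin (n+1) // i ≠ ℓ}))) with hP
    set D : Finset (Finset {i : Fin (n+1) // i ≠ ℓ}) := Fm.image (fun v => down (Pos v))
      with hD
    -- general membership facts
    have hmemdown : ∀ (s : Finset (Fin (n+1))) (x : {i : Fin (n+1) // i ≠ ℓ}),
        x ∈ down s ↔ (x : Fin (n+1)) ∈ s := by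
      intro s x
      rw [hdown]
      exact Finset.mem_subtype
    have hPosℓ1 : ∀ v ∈ F1, ℓ ∈ Pos v := fun v hv => mem_Pos.2 (hF1mem v hv).2
    have hPosℓm : ∀ v ∈ Fm, ℓ ∉ Pos v := by
      intro v hv h
      rw [mem_Pos, (hFmmem v hv).2] at h; norm_num at h
    have herase_m : ∀ v ∈ Fm, (Pos v).erase ℓ = Pos v := fun v hv =>
      Finset.erase_eq_of_notMem (hPosℓm v hv)
    -- cardinalities of P and D
    have hDcard : D.card = Fm.card := by
      apply Finset.card_image_of_injOn
      intro u hu v hv huv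
      have h1 : Pos u = Pos v := by
        have := congrArg (Finset.map (Function.Embedding.subtype _)) huv
        rw [hdown_erase, hdown_erase, herase_m u hu, herase_m v hv] at this
        exact this
      have h2 : Neg u = Neg v := by
        rw [Neg_eq_of (hFV u (hFmmem u hu).1) (hFmmem u hu).2,
          Neg_eq_of (hFV v (hFmmem v hv).1) (hFmmem v hv).2]
      exact eq_of_pos_neg (hFV u (hFmmem u hu).1) (hFV v (hFmmem v hv).1) h1 h2
    have hPcard : P.card = F1.card := by
      rw [hP]
      rw [Finset.card_image_of_injOn, Finset.card_attach]
      rintro ⟨u, hu⟩ - ⟨v, hv⟩ - huv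
      simp only [Prod.mk.injEq, Subtype.mk.injEq] at huv
      have h1 : Pos u = Pos v := by
        have := congrArg (Finset.map (Function.Embedding.subtype _)) huv.1
        rw [hdown_erase, hdown_erase] at this
        have hu' := hPosℓ1 u hu
        have hv' := hPosℓ1 v hv
        rw [← Finset.insert_erase hu', ← Finset.insert_erase hv', this]
      have hne : negEl u = negEl v := huv.2
      have h2 : Neg u = Neg v := by
        rw [Neg_eq_negEl (hFV u (hF1mem u hu).1), Neg_eq_negEl (hFV v (hF1mem v hv).1), hne]
      have := eq_of_pos_neg (hFV u (hF1mem u hu).1) (hFV v (hF1mem v hv).1) h1 h2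
      exact Subtype.ext this
    -- core hypotheses
    have hcore := core (k := k) hk (by rw [hcardα]; exact hn) P D ?_ ?_ ?_ ?_ ?_
    · rw [hcardα] at hcore
      omega
    · -- hP1
      rintro p hp
      rw [hP, Finset.mem_image] at hp
      obtain ⟨⟨v, hv⟩, -, rfl⟩ := hp
      simp only
      rw [hdowncard, Finset.card_erase_of_mem (hPosℓ1 v hv),
        card_Pos (hFV v (hF1mem v hv).1)]
    · -- hP2
      rintro p hp
      rw [hP, Finset.mem_image] at hp
      obtain ⟨⟨v, hv⟩, -, rfl⟩ := hp
      simp only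
      rw [hmemdown]
      intro h
      have := Neg_eq_negEl (hFV v (hF1mem v hv).1)
      have hneg : v (negEl v) = -1 := mem_Neg.1 (this ▸ Finset.mem_singleton_self _)
      rw [mem_Pos, hneg] at h
      norm_num at h
    · -- hPint
      rintro p hp q hq
      rw [hP, Finset.mem_image] at hp hq
      obtain ⟨⟨v, hv⟩, -, rfl⟩ := hp
      obtain ⟨⟨w, hw⟩, -, rfl⟩ := hq
      show ¬Disjoint (down (Pos v)) (down (Pos w))
      obtain ⟨x, hx1, hx2⟩ := parts_int hk hn hFV hFi hstab
        (hF1mem v hv).1 (hF1mem w hw).1 (hF1mem v hv).2 (hF1mem w hw).2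
      rw [Finset.not_disjoint_iff]
      have hxℓ : x ≠ ℓ := (Finset.mem_erase.1 hx1).1
      refine ⟨⟨x, hxℓ⟩, ?_, ?_⟩
      · rw [hmemdown]; exact (Finset.mem_erase.1 hx1).2
      · rw [hmemdown]; exact (Finset.mem_erase.1 hx2).2
    · -- hD
      rintro B hB
      rw [hD, Finset.mem_image] at hB
      obtain ⟨v, hv, rfl⟩ := hB
      rw [hdowncard, herase_m v hv, card_Pos (hFV v (hFmmem v hv).1)]
    · -- hPD
      rintro p hp B hB hmem hdisj
      rw [hP, Finset.mem_image] at hp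
      obtain ⟨⟨v, hv⟩, -, rfl⟩ := hp
      rw [hD, Finset.mem_image] at hB
      obtain ⟨u, hu, rfl⟩ := hB
      simp only at hmem hdisj
      apply hFi v (hF1mem v hv).1 u (hFmmem u hu).1
      rw [dot_neg_two_iff (hFV v (hF1mem v hv).1) (hFV u (hFmmem u hu).1)
        (Neg_eq_negEl (hFV v (hF1mem v hv).1)) (Neg_eq_of (hFV u (hFmmem u hu).1) (hFmmem u hu).2)]
      refine ⟨?_, ?_, hPosℓ1 v hv⟩
      · ext x
        simp only [Finset.mem_inter, Finset.notMem_empty, iff_false, not_and]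
        intro hxv hxu
        have hxℓ : x ≠ ℓ := fun h => hPosℓm u hu (h ▸ hxu)
        exact (Finset.disjoint_left.1 hdisj ((hmemdown (Pos v) ⟨x, hxℓ⟩).2 hxv))
          ((hmemdown (Pos u) ⟨x, hxℓ⟩).2 hxu)
      · exact (hmemdown _ _).1 hmem
  refine ⟨G, hGV, hGi, ?_⟩
  omega


lemma V_finite : (V N k 1).Finite := by
  apply Set.Finite.of_finite_image (f := fun v => (Pos v, Neg v)) (Set.toFinite _)
  intro u hu v hv huv
  exact eq_of_pos_neg hu hv (congrArg Prod.fst huv) (congrArg Prod.snd huv)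

lemma castcard (v : Fin (n+1) → ℤ) (c : ℤ) (hvc : v (Fin.last n) ≠ c) :
    (univ.filter fun i : Fin (n+1) => v i = c).card
      = (univ.filter fun j : Fin n => v (Fin.castSucc j) = c).card := by
  symm
  apply Finset.card_bij (fun j _ => Fin.castSucc j)
  · intro j hj
    simp only [Finset.mem_filter, Finset.mem_univ, true_and] at hj ⊢
    exact hj
  · intro j _ j' _ h
    exact Fin.castSucc_injective n h
  · intro i hi
    simp only [Finset.mem_filter, Finset.mem_univ, true_and] at hi
    have hiℓ : i ≠ Fin.last n := fun h => hvc (h ▸ hi)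
    refine ⟨i.castPred hiℓ, ?_, Fin.castSucc_castPred i hiℓ⟩
    simp only [Finset.mem_filter, Finset.mem_univ, true_and, Fin.castSucc_castPred]
    exact hi

/-- vector with +1 on `B` and -1 at the last coordinate -/
def DVec {n : ℕ} (B : Finset (Fin n)) : Fin (n+1) → ℤ :=
  fun i => Fin.lastCases (-1) (fun j => if j ∈ B then (1:ℤ) else 0) i

lemma DVec_last {B : Finset (Fin n)} : DVec B (Fin.last n) = -1 := by
  rw [DVec, Fin.lastCases_last]

lemma DVec_cast {B : Finset (Fin n)} {j : Fin n} :
    DVec B (Fin.castSucc j) = if j ∈ B then (1:ℤ) else 0 := by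
  rw [DVec, Fin.lastCases_castSucc]

lemma DVec_mem_V {B : Finset (Fin n)} (hB : B.card = k) : DVec B ∈ V (n+1) k 1 := by
  refine ⟨?_, ?_, ?_⟩
  · intro i
    induction i using Fin.lastCases with
    | last => rw [DVec_last]; norm_num
    | cast j => rw [DVec_cast]; split_ifs <;> norm_num
  · rw [castcard _ _ (by rw [DVec_last]; norm_num)]
    have : (univ.filter fun j : Fin n => DVec B (Fin.castSucc j) = 1) = B := by
      ext j
      simp only [Finset.mem_filter, Finset.mem_univ, true_and, DVec_cast]
      split_ifs with h <;> simp [h]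
    rw [this, hB]
  · have : (univ.filter fun i : Fin (n+1) => DVec B i = -1) = {Fin.last n} := by
      ext i
      simp only [Finset.mem_filter, Finset.mem_univ, true_and, Finset.mem_singleton]
      induction i using Fin.lastCases with
      | last => simp [DVec_last]
      | cast j =>
        rw [DVec_cast]
        constructor
        · intro h; split_ifs at h <;> norm_num at h
        · intro h; exact absurd h (Fin.castSucc_lt_last j).ne
    rw [this, Finset.card_singleton]

lemma up_mem_V {v : Fin n → ℤ} (hv : v ∈ V n k 1) :
    (Fin.snoc v 0 : Fin (n+1) → ℤ) ∈ V (n+1) k 1 := by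
  refine ⟨?_, ?_, ?_⟩
  · intro i
    induction i using Fin.lastCases with
    | last => rw [Fin.snoc_last]; norm_num
    | cast j => rw [Fin.snoc_castSucc]; exact hv.1 j
  · rw [castcard _ _ (by rw [Fin.snoc_last]; norm_num)]
    have : (univ.filter fun j : Fin n => (Fin.snoc v 0 : Fin (n+1) → ℤ) (Fin.castSucc j) = 1)
        = univ.filter fun j => v j = 1 := by
      apply Finset.filter_congr
      intro j _
      rw [Fin.snoc_castSucc]
    rw [this, hv.2.1]
  · rw [castcard _ _ (by rw [Fin.snoc_last]; norm_num)]
    have : (univ.filter fun j : Fin n => (Fin.snoc v 0 : Fin (n+1) → ℤ) (Fin.castSucc j) = -1)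
        = univ.filter fun j => v j = -1 := by
      apply Finset.filter_congr
      intro j _
      rw [Fin.snoc_castSucc]
    rw [this, hv.2.2]

lemma lower (hk : 2 ≤ k) {m₁ : ℕ} (h : m₁ ∈ interSizes n k) :
    m₁ + n.choose k ∈ interSizes (n+1) k := by
  classical
  obtain ⟨F, hFV, hFi, hcard⟩ := h
  have hFfin : F.Finite := V_finite.subset hFV
  set up : (Fin n → ℤ) → (Fin (n+1) → ℤ) := fun v => Fin.snoc v 0 with hup
  have hupinj : Function.Injective up := by
    intro u v huv
    funext j
    have h2 := congrFun huv (Fin.castSucc j)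
    rw [hup] at h2
    simp only [Fin.snoc_castSucc] at h2
    exact h2
  set G1 : Set (Fin (n+1) → ℤ) := up '' F with hG1
  set Dall : Set (Fin (n+1) → ℤ) := DVec '' ↑(Finset.powersetCard k (univ : Finset (Fin n)))
    with hDall
  have hDVinj : Function.Injective (DVec (n := n)) := by
    intro B B' hBB
    ext j
    have := congrFun hBB (Fin.castSucc j)
    rw [DVec_cast, DVec_cast] at this
    by_cases hj : j ∈ B <;> by_cases hj' : j ∈ B' <;>
      simp [hj, hj'] at this ⊢
  have hupl : ∀ v, up v (Fin.last n) = 0 := fun v => by rw [hup]; exact Fin.snoc_last _ _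
  -- membership facts
  have hG1V : ∀ x ∈ G1, x ∈ V (n+1) k 1 := by
    rintro x ⟨v, hv, rfl⟩
    exact up_mem_V (hFV hv)
  have hDallV : ∀ x ∈ Dall, x ∈ V (n+1) k 1 := by
    rintro x ⟨B, hB, rfl⟩
    rw [Finset.mem_coe, Finset.mem_powersetCard_univ] at hB
    exact DVec_mem_V hB
  have hG1posl : ∀ x ∈ G1, Fin.last n ∉ Pos x := by
    rintro x ⟨v, hv, rfl⟩ hmem
    rw [mem_Pos, hupl] at hmem
    norm_num at hmem
  have hDnegl : ∀ x ∈ Dall, Neg x = {Fin.last n} := by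
    rintro x ⟨B, hB, rfl⟩
    rw [Finset.mem_coe, Finset.mem_powersetCard_univ] at hB
    exact Neg_eq_of (DVec_mem_V hB) DVec_last
  refine ⟨G1 ∪ Dall, ?_, ?_, ?_⟩
  · intro x hx
    rcases hx with hx | hx
    · exact hG1V x hx
    · exact hDallV x hx
  · -- intersecting
    intro x hx y hy
    rcases hx with hx | hx <;> rcases hy with hy | hy
    · -- both lifted
      obtain ⟨u, hu, rfl⟩ := hx
      obtain ⟨v, hv, rfl⟩ := hy
      have : dot (up u) (up v) = dot u v := by
        unfold dot
        rw [Fin.sum_univ_castSucc (f := fun i => up u i * up v i)]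
        simp only [hup, Fin.snoc_castSucc, Fin.snoc_last, zero_mul, add_zero]
      rw [this]
      exact hFi u hu v hv
    · -- lifted vs D : neg of y is last, last ∉ Pos x
      obtain ⟨a, ha⟩ := exists_neg (hG1V x hx)
      intro hdot
      rw [dot_neg_two_iff (hG1V x hx) (hDallV y hy) ha (hDnegl y hy)] at hdot
      obtain ⟨-, -, hc⟩ := hdot
      exact hG1posl x hx hc
    · obtain ⟨b, hb⟩ := exists_neg (hG1V y hy)
      intro hdot
      rw [dot_neg_two_iff (hDallV x hx) (hG1V y hy) (hDnegl x hx) hb] at hdot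
      obtain ⟨-, hc, -⟩ := hdot
      exact hG1posl y hy hc
    · intro hdot
      rw [dot_neg_two_iff (hDallV x hx) (hDallV y hy) (hDnegl x hx) (hDnegl y hy)] at hdot
      obtain ⟨-, hc, -⟩ := hdot
      have := hDnegl y hy
      have hyl : y (Fin.last n) = -1 := mem_Neg.1 (this ▸ Finset.mem_singleton_self _)
      rw [mem_Pos, hyl] at hc
      norm_num at hc
  · -- cardinality
    have hdisj : Disjoint G1 Dall := by
      rw [Set.disjoint_left]
      rintro x ⟨u, hu, rfl⟩ ⟨B, hB, hBx⟩
      have h1 : up u (Fin.last n) = 0 := hupl u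
      have h2 : DVec B (Fin.last n) = -1 := DVec_last
      rw [hBx] at h2
      rw [h1] at h2
      norm_num at h2
    have hG1fin : G1.Finite := hFfin.image up
    have hDfin : Dall.Finite := (Finset.powersetCard k (univ : Finset (Fin n))).finite_toSet.image _
    rw [Set.ncard_union_eq hdisj hG1fin hDfin]
    have e1 : G1.ncard = m₁ := by
      rw [hG1, Set.ncard_image_of_injective _ hupinj, hcard]
    have e2 : Dall.ncard = n.choose k := by
      rw [hDall, Set.ncard_image_of_injective _ hDVinj, Set.ncard_coe_finset,
        Finset.card_powersetCard, Finset.card_univ, Fintype.card_fin]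
    rw [e1, e2]

end Aux18

theorem stmt_18 (n k : ℕ) (hk : 2 ≤ k) (hn : k ^ 2 ≤ n)
    (m₁ m₂ : ℕ)
    (hm₁ : IsGreatest (interSizes n k) m₁)
    (hm₂ : IsGreatest (interSizes (n + 1) k) m₂) :
    m₂ = m₁ + n.choose k := by
  classical
  have hupper : m₂ ≤ m₁ + n.choose k := by
    obtain ⟨F, hFV, hFi, hcard⟩ := hm₂.1
    have hFfin : F.Finite := Aux18.V_finite.subset hFV
    set F' := hFfin.toFinset with hF'
    have hF'card : F'.card = m₂ := by
      rw [← hcard, Set.ncard_eq_toFinset_card F hFfin]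
    have hF'V : ∀ v ∈ F', v ∈ V (n+1) k 1 := fun v hv => hFV (hFfin.mem_toFinset.1 hv)
    have hF'i : ∀ v ∈ F', ∀ w ∈ F', dot v w ≠ -2 := fun v hv w hw =>
      hFi v (hFfin.mem_toFinset.1 hv) w (hFfin.mem_toFinset.1 hw)
    obtain ⟨F'', hV'', hi'', hcard'', hstab''⟩ :=
      Aux18.exists_stable (k := k) (Aux18.phi F') F' le_rfl hF'V hF'i
    obtain ⟨G, hGV, hGi, hle⟩ := Aux18.stable_count hk hn hV'' hi'' hstab''
    have hGmem : G.card ∈ interSizes n k :=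
      ⟨↑G, fun v hv => hGV v (Finset.mem_coe.1 hv),
        fun v hv w hw => hGi v (Finset.mem_coe.1 hv) w (Finset.mem_coe.1 hw),
        Set.ncard_coe_finset G⟩
    have hG1 := hm₁.2 hGmem
    omega
  have hlower := hm₂.2 (Aux18.lower hk hm₁.1)
  omega
end

section
/- Let k = 3, n = 8 and let F ⊂ V(n+1,k,1) be a shifted intersecting family. Then any two sets of +1 coordinates (restricted to positions 2..n) of vectors of F having -1 in position 1 and +1 in position n+1 share at least 2 common elements; consequently there is at most one such vector. -/
/-- the `(i,j)`-shift of one vector: swap coordinates `i` and `j` if `v i < v j`. -/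
def shiftVec {n : ℕ} (i j : Fin n) (v : Fin n → ℤ) : Fin n → ℤ :=
  if v i < v j then v ∘ (Equiv.swap i j) else v


lemma extract9 (v : Fin 9 → ℤ) (hv : v ∈ V 9 3 1) (h0 : v 0 = -1) (h8 : v 8 = 1) :
    ∃ a b : Fin 9, a ≠ b ∧ a ≠ 0 ∧ a ≠ 8 ∧ b ≠ 0 ∧ b ≠ 8 ∧
      ∀ i, v i = if i = 0 then -1 else if i = a ∨ i = b ∨ i = 8 then 1 else 0 := by
  obtain ⟨hr, h1c, hmc⟩ := hv
  have hm : ∀ i, v i = -1 → i = 0 := by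
    intro i hi
    obtain ⟨x, hx⟩ := Finset.card_eq_one.mp hmc
    have h0x : (0 : Fin 9) ∈ Finset.univ.filter fun j => v j = -1 := by simp [h0]
    have hix : i ∈ Finset.univ.filter fun j => v j = -1 := by simp [hi]
    rw [hx, Finset.mem_singleton] at h0x hix
    rw [hix, h0x]
  have h8S : (8 : Fin 9) ∈ Finset.univ.filter fun j => v j = 1 := by simp [h8]
  have hcard2 : ((Finset.univ.filter fun j => v j = 1).erase 8).card = 2 := by
    rw [Finset.card_erase_of_mem h8S, h1c]
  obtain ⟨a, b, hab, hab2⟩ := Finset.card_eq_two.mp hcard2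
  have haS : a ∈ (Finset.univ.filter fun j => v j = 1).erase 8 := by rw [hab2]; simp
  have hbS : b ∈ (Finset.univ.filter fun j => v j = 1).erase 8 := by rw [hab2]; simp
  have hva : v a = 1 := (Finset.mem_filter.mp (Finset.mem_of_mem_erase haS)).2
  have hvb : v b = 1 := (Finset.mem_filter.mp (Finset.mem_of_mem_erase hbS)).2
  have ha8 : a ≠ 8 := Finset.ne_of_mem_erase haS
  have hb8 : b ≠ 8 := Finset.ne_of_mem_erase hbS
  have ha0 : a ≠ 0 := by rintro rfl; rw [h0] at hva; norm_num at hva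
  have hb0 : b ≠ 0 := by rintro rfl; rw [h0] at hvb; norm_num at hvb
  refine ⟨a, b, hab, ha0, ha8, hb0, hb8, fun i => ?_⟩
  by_cases hi0 : i = 0
  · rw [if_pos hi0, hi0, h0]
  rw [if_neg hi0]
  by_cases hi1 : i = a ∨ i = b ∨ i = 8
  · rw [if_pos hi1]
    rcases hi1 with rfl | rfl | rfl
    · exact hva
    · exact hvb
    · exact h8
  · rw [if_neg hi1]
    rcases hr i with h | h | h
    · exact h
    · exfalso
      have hiS : i ∈ (Finset.univ.filter fun j => v j = 1) := by simp [h]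
      by_cases hi8 : i = 8
      · exact hi1 (Or.inr (Or.inr hi8))
      · have : i ∈ ({a, b} : Finset (Fin 9)) := hab2 ▸ Finset.mem_erase.mpr ⟨hi8, hiS⟩
        simp only [Finset.mem_insert, Finset.mem_singleton] at this
        exact hi1 (by rcases this with h' | h'; exacts [Or.inl h', Or.inr (Or.inl h')])
    · exact absurd (hm i h) hi0

-- main "at least 2 common" lemma
set_option maxHeartbeats 1000000 in
lemma main2 (F : Set (Fin 9 → ℤ)) (hF : F ⊆ V 9 3 1)
    (hint : ∀ v ∈ F, ∀ w ∈ F, dot v w ≠ -2)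
    (hshift : ∀ i j : Fin 9, i < j → ∀ v ∈ F, shiftVec i j v ∈ F)
    (v : Fin 9 → ℤ) (hvF : v ∈ F) (w : Fin 9 → ℤ) (hwF : w ∈ F)
    (hv0 : v 0 = -1) (hv8 : v 8 = 1) (hw0 : w 0 = -1) (hw8 : w 8 = 1) :
    2 ≤ (Finset.univ.filter fun i : Fin 9 =>
            v i = 1 ∧ w i = 1 ∧ (i : ℕ) ≠ 8).card := by
  obtain ⟨a1, a2, ha12, ha10, ha18, ha20, ha28, hvf⟩ := extract9 v (hF hvF) hv0 hv8
  obtain ⟨b1, b2, hb12, hb10, hb18, hb20, hb28, hwf⟩ := extract9 w (hF hwF) hw0 hw8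
  by_contra hlt
  -- a1, a2 not both in {b1, b2}
  have hnotboth : ¬((a1 = b1 ∨ a1 = b2) ∧ (a2 = b1 ∨ a2 = b2)) := by
    rintro ⟨h1, h2⟩
    apply hlt
    have hm1 : a1 ∈ Finset.univ.filter fun i : Fin 9 =>
        v i = 1 ∧ w i = 1 ∧ (i : ℕ) ≠ 8 := by
      simp only [Finset.mem_filter, Finset.mem_univ, true_and]
      refine ⟨by rw [hvf, if_neg ha10, if_pos (Or.inl rfl)], ?_, ?_⟩
      · rw [hwf, if_neg ha10, if_pos (by
          rcases h1 with h | h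
          exacts [Or.inl h, Or.inr (Or.inl h)])]
      · simpa [Fin.ext_iff] using ha18
    have hm2 : a2 ∈ Finset.univ.filter fun i : Fin 9 =>
        v i = 1 ∧ w i = 1 ∧ (i : ℕ) ≠ 8 := by
      simp only [Finset.mem_filter, Finset.mem_univ, true_and]
      refine ⟨by rw [hvf, if_neg ha20, if_pos (Or.inr (Or.inl rfl))], ?_, ?_⟩
      · rw [hwf, if_neg ha20, if_pos (by
          rcases h2 with h | h
          exacts [Or.inl h, Or.inr (Or.inl h)])]
      · simpa [Fin.ext_iff] using ha28
    calc 2 = ({a1, a2} : Finset (Fin 9)).card := by rw [Finset.card_pair ha12]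
    _ ≤ _ := Finset.card_le_card (by intro x hx; simp at hx; rcases hx with rfl | rfl <;> assumption)
  -- pick a ∈ A s.t. A ∩ B ⊆ {a}
  obtain ⟨a, haA, haAB⟩ : ∃ a, (a = a1 ∨ a = a2) ∧
      ∀ i, (i = a1 ∨ i = a2) → (i = b1 ∨ i = b2) → i = a := by
    by_cases h : a1 = b1 ∨ a1 = b2
    · refine ⟨a1, Or.inl rfl, ?_⟩
      rintro i (rfl | rfl) hi
      · rfl
      · exact absurd ⟨h, hi⟩ hnotboth
    · refine ⟨a2, Or.inr rfl, ?_⟩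
      rintro i (rfl | rfl) hi
      · exact absurd hi h
      · rfl
  -- pick c ∈ B \ A
  obtain ⟨c, hcB, hca1, hca2⟩ : ∃ c, (c = b1 ∨ c = b2) ∧ c ≠ a1 ∧ c ≠ a2 := by
    by_cases h1 : b1 = a1 ∨ b1 = a2
    · refine ⟨b2, Or.inr rfl, ?_, ?_⟩ <;>
      · rintro rfl
        rcases h1 with rfl | rfl <;> tauto
    · push_neg at h1
      exact ⟨b1, Or.inl rfl, h1.1, h1.2⟩
  -- pick fresh e
  obtain ⟨e, he⟩ : ∃ e : Fin 9, e ∉ ({0, 8, a1, a2, b1, b2} : Finset (Fin 9)) := by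
    by_contra h
    push_neg at h
    have hsub : (Finset.univ : Finset (Fin 9)) ⊆ {0, 8, a1, a2, b1, b2} := fun x _ => h x
    have h9 : (9 : ℕ) ≤ ({0, 8, a1, a2, b1, b2} : Finset (Fin 9)).card := by
      simpa using Finset.card_le_card hsub
    have h6 : ({0, 8, a1, a2, b1, b2} : Finset (Fin 9)).card ≤ 6 :=
      (Finset.card_insert_le _ _).trans (Nat.succ_le_succ
        ((Finset.card_insert_le _ _).trans (Nat.succ_le_succ
          ((Finset.card_insert_le _ _).trans (Nat.succ_le_succ
            ((Finset.card_insert_le _ _).trans (Nat.succ_le_succ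
              ((Finset.card_insert_le _ _).trans (Nat.succ_le_succ (by simp))))))))))
    omega
  simp only [Finset.mem_insert, Finset.mem_singleton, not_or] at he
  obtain ⟨he0, he8, hea1, hea2, heb1, heb2⟩ := he
  -- basic facts
  have ha0 : a ≠ 0 := by rcases haA with rfl | rfl <;> assumption
  have ha8 : a ≠ 8 := by rcases haA with rfl | rfl <;> assumption
  have hc0 : c ≠ 0 := by rcases hcB with rfl | rfl <;> assumption
  have hc8 : c ≠ 8 := by rcases hcB with rfl | rfl <;> assumption
  have hce : c ≠ e := by
    rintro rfl
    rcases hcB with h | h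
    exacts [heb1 h, heb2 h]
  -- helper: values of v
  have hva1 : v a1 = 1 := by rw [hvf]; simp [ha10]
  have hva2 : v a2 = 1 := by rw [hvf]; simp [ha20]
  have hvc : v c = 0 := by rw [hvf]; simp [hc0, hca1, hca2, hc8]
  have hve : v e = 0 := by rw [hvf]; simp [he0, hea1, hea2, he8]
  -- shift conditions
  have hlt_e8 : (e : Fin 9) < 8 := by
    rw [Fin.lt_def]
    have := e.isLt
    have : (e : ℕ) ≠ 8 := by simpa [Fin.ext_iff] using he8
    omega
  have hlt_0c : (0 : Fin 9) < c := Fin.pos_of_ne_zero hc0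
  have hlt_0a : (0 : Fin 9) < a := Fin.pos_of_ne_zero ha0
  -- define v1 = shift e 8 v
  have hv1F : shiftVec e 8 v ∈ F := hshift e 8 hlt_e8 v hvF
  have hv1 : shiftVec e 8 v = v ∘ Equiv.swap e 8 := by
    rw [shiftVec, if_pos]; rw [hve, hv8]; norm_num
  set v1 : Fin 9 → ℤ := v ∘ Equiv.swap e 8 with hv1def
  rw [hv1] at hv1F
  have hv1f : ∀ i, v1 i = if i = 0 then -1 else if i = a1 ∨ i = a2 ∨ i = e then 1 else 0 := by
    intro i
    rcases eq_or_ne i e with rfl | hie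
    · simp only [hv1def, Function.comp_apply, Equiv.swap_apply_left]
      rw [hv8, if_neg he0]
      simp
    rcases eq_or_ne i 8 with rfl | hi8
    · simp only [hv1def, Function.comp_apply, Equiv.swap_apply_right]
      rw [hve, if_neg (show (8 : Fin 9) ≠ 0 by decide), if_neg (by
        push_neg
        exact ⟨fun h => ha18 h.symm, fun h => ha28 h.symm, fun h => he8 h.symm⟩)]
    · simp only [hv1def, Function.comp_apply, Equiv.swap_apply_of_ne_of_ne hie hi8]
      rw [hvf]
      simp only [hie, hi8, or_false]
  have hv2F : shiftVec 0 c v1 ∈ F := hshift 0 c hlt_0c v1 hv1F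
  have hv1c : v1 c = 0 := by
    rw [hv1f, if_neg hc0, if_neg (by push_neg; exact ⟨hca1, hca2, hce⟩)]
  have hv10 : v1 0 = -1 := by rw [hv1f, if_pos rfl]
  have hv2 : shiftVec 0 c v1 = v1 ∘ Equiv.swap 0 c := by
    rw [shiftVec, if_pos (by rw [hv10, hv1c]; norm_num)]
  set v2 : Fin 9 → ℤ := v1 ∘ Equiv.swap 0 c with hv2def
  rw [hv2] at hv2F
  have hv2f : ∀ i, v2 i = if i = c then -1 else if i = a1 ∨ i = a2 ∨ i = e then 1 else 0 := by
    intro i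
    by_cases hic : i = c
    · rw [if_pos hic, hv2def]
      simp only [Function.comp_apply]
      rw [hic, Equiv.swap_apply_right, hv10]
    by_cases hi0 : i = 0
    · rw [if_neg hic, if_neg (by
        rw [hi0]
        push_neg
        exact ⟨fun h => ha10 h.symm, fun h => ha20 h.symm, fun h => he0 h.symm⟩),
        hv2def]
      simp only [Function.comp_apply]
      rw [hi0, Equiv.swap_apply_left, hv1c]
    · rw [if_neg hic, hv2def]
      simp only [Function.comp_apply]
      rw [Equiv.swap_apply_of_ne_of_ne hi0 hic, hv1f, if_neg hi0]
  -- w' = shift 0 a w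
  have hwa_nonneg : w 0 < w a := by
    rw [hw0, hwf a, if_neg ha0]
    split_ifs <;> norm_num
  have hw'F : shiftVec 0 a w ∈ F := hshift 0 a hlt_0a w hwF
  have hw' : shiftVec 0 a w = w ∘ Equiv.swap 0 a := by rw [shiftVec, if_pos hwa_nonneg]
  set w' : Fin 9 → ℤ := w ∘ Equiv.swap 0 a with hw'def
  rw [hw'] at hw'F
  have hw'f : ∀ i, w' i = if i = a then -1 else if i = 0 then w a else w i := by
    intro i
    by_cases hia : i = a
    · rw [if_pos hia, hw'def]
      simp only [Function.comp_apply]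
      rw [hia, Equiv.swap_apply_right, hw0]
    by_cases hi0 : i = 0
    · rw [if_neg hia, if_pos hi0, hw'def]
      simp only [Function.comp_apply]
      rw [hi0, Equiv.swap_apply_left]
    · rw [if_neg hia, if_neg hi0, hw'def]
      simp only [Function.comp_apply]
      rw [Equiv.swap_apply_of_ne_of_ne hi0 hia]
  -- the key pointwise computation
  have hac : a ≠ c := by
    rcases haA with rfl | rfl
    · exact fun h => hca1 h.symm
    · exact fun h => hca2 h.symm
  have key : ∀ i : Fin 9, v2 i * w' i =
      (if i = a then (-1 : ℤ) else 0) + (if i = c then -1 else 0) := by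
    intro i
    by_cases hia : i = a
    · rw [if_pos hia, if_neg (by rw [hia]; exact hac)]
      rw [hv2f, hw'f, if_pos hia, if_neg (by rw [hia]; exact hac),
        if_pos (by
          rw [hia]
          rcases haA with h | h
          exacts [Or.inl h, Or.inr (Or.inl h)])]
      norm_num
    by_cases hic : i = c
    · rw [if_neg hia, if_pos hic]
      rw [hv2f, hw'f, if_pos hic, if_neg hia, if_neg (by rw [hic]; exact hc0),
        hwf, if_neg (by rw [hic]; exact hc0), if_pos (by
          rw [hic]
          rcases hcB with h | h
          exacts [Or.inl h, Or.inr (Or.inl h)])]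
      norm_num
    rw [if_neg hia, if_neg hic]
    have hz : v2 i = 0 ∨ w' i = 0 := by
      by_cases hmem : i = a1 ∨ i = a2
      · right
        have hi0 : i ≠ 0 := by
          rcases hmem with h | h <;> rw [h]
          exacts [ha10, ha20]
        have hi8 : i ≠ 8 := by
          rcases hmem with h | h <;> rw [h]
          exacts [ha18, ha28]
        have hiB : ¬(i = b1 ∨ i = b2) := fun hB => hia (haAB i hmem hB)
        push_neg at hiB
        rw [hw'f, if_neg hia, if_neg hi0, hwf, if_neg hi0,
          if_neg (by push_neg; exact ⟨hiB.1, hiB.2, hi8⟩)]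
      by_cases hie : i = e
      · right
        have hi0 : i ≠ 0 := by rw [hie]; exact he0
        have hi8 : i ≠ 8 := by rw [hie]; exact he8
        rw [hw'f, if_neg hia, if_neg hi0, hwf, if_neg hi0,
          if_neg (by
            push_neg
            exact ⟨by rw [hie]; exact heb1, by rw [hie]; exact heb2, hi8⟩)]
      · left
        push_neg at hmem
        rw [hv2f, if_neg hic, if_neg (by push_neg; exact ⟨hmem.1, hmem.2, hie⟩)]
    rcases hz with h | h <;> rw [h] <;> ring
  have hdot : dot v2 w' = -2 := by
    rw [dot]
    rw [Finset.sum_congr rfl fun i _ => key i, Finset.sum_add_distrib]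
    simp
  exact hint v2 hv2F w' hw'F hdot

theorem stmt_19 (F : Set (Fin 9 → ℤ)) (hF : F ⊆ V 9 3 1)
    (hint : ∀ v ∈ F, ∀ w ∈ F, dot v w ≠ -2)
    (hshift : ∀ i j : Fin 9, i < j → ∀ v ∈ F, shiftVec i j v ∈ F) :
    (∀ v ∈ F, ∀ w ∈ F,
      v 0 = -1 → v 8 = 1 → w 0 = -1 → w 8 = 1 →
      2 ≤ (Finset.univ.filter fun i : Fin 9 =>
            v i = 1 ∧ w i = 1 ∧ (i : ℕ) ≠ 8).card) ∧
    (∀ v ∈ F, ∀ w ∈ F,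
      v 0 = -1 → v 8 = 1 → w 0 = -1 → w 8 = 1 → v = w) := by
  refine ⟨fun v hv w hw h1 h2 h3 h4 => main2 F hF hint hshift v hv w hw h1 h2 h3 h4, ?_⟩
  intro v hvF w hwF hv0 hv8 hw0 hw8
  obtain ⟨a1, a2, ha12, ha10, ha18, ha20, ha28, hvf⟩ := extract9 v (hF hvF) hv0 hv8
  obtain ⟨b1, b2, hb12, hb10, hb18, hb20, hb28, hwf⟩ := extract9 w (hF hwF) hw0 hw8
  have h2 := main2 F hF hint hshift v hvF w hwF hv0 hv8 hw0 hw8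
  set T := Finset.univ.filter fun i : Fin 9 => v i = 1 ∧ w i = 1 ∧ (i : ℕ) ≠ 8 with hT
  have hTsub : T ⊆ {a1, a2} := by
    intro x hx
    simp only [hT, Finset.mem_filter, Finset.mem_univ, true_and] at hx
    obtain ⟨hx1, hx2, hx8⟩ := hx
    have hx8' : x ≠ 8 := by simpa [Fin.ext_iff] using hx8
    have hx0 : x ≠ 0 := by rintro rfl; rw [hv0] at hx1; norm_num at hx1
    rw [hvf, if_neg hx0] at hx1
    by_cases hmem : x = a1 ∨ x = a2 ∨ x = 8
    · rcases hmem with h | h | h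
      · simp [h]
      · simp [h]
      · exact absurd h hx8'
    · rw [if_neg hmem] at hx1; norm_num at hx1
  have hTeq : T = {a1, a2} :=
    Finset.eq_of_subset_of_card_le hTsub (by rw [Finset.card_pair ha12]; exact h2)
  have ha1T : a1 ∈ T := by rw [hTeq]; simp
  have ha2T : a2 ∈ T := by rw [hTeq]; simp
  have hwa1 : w a1 = 1 := by
    have := (Finset.mem_filter.mp ha1T).2
    exact this.2.1
  have hwa2 : w a2 = 1 := by
    have := (Finset.mem_filter.mp ha2T).2
    exact this.2.1
  have h1B : a1 = b1 ∨ a1 = b2 := by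
    rw [hwf, if_neg ha10] at hwa1
    by_cases hmem : a1 = b1 ∨ a1 = b2 ∨ a1 = 8
    · rcases hmem with h | h | h
      exacts [Or.inl h, Or.inr h, absurd h ha18]
    · rw [if_neg hmem] at hwa1; norm_num at hwa1
  have h2B : a2 = b1 ∨ a2 = b2 := by
    rw [hwf, if_neg ha20] at hwa2
    by_cases hmem : a2 = b1 ∨ a2 = b2 ∨ a2 = 8
    · rcases hmem with h | h | h
      exacts [Or.inl h, Or.inr h, absurd h ha28]
    · rw [if_neg hmem] at hwa2; norm_num at hwa2
  have hperm : (a1 = b1 ∧ a2 = b2) ∨ (a1 = b2 ∧ a2 = b1) := by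
    rcases h1B with h | h <;> rcases h2B with h' | h'
    · exact absurd (h.trans h'.symm) ha12
    · exact Or.inl ⟨h, h'⟩
    · exact Or.inr ⟨h, h'⟩
    · exact absurd (h.trans h'.symm) ha12
  funext i
  rw [hvf, hwf]
  rcases hperm with ⟨hp1, hp2⟩ | ⟨hp1, hp2⟩ <;> rw [hp1, hp2]
  by_cases hi0 : i = 0
  · rw [if_pos hi0, if_pos hi0]
  rw [if_neg hi0, if_neg hi0]
  by_cases h : i = b2 ∨ i = b1 ∨ i = 8
  · rw [if_pos h, if_pos (by
      rcases h with h' | h' | h'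
      exacts [Or.inr (Or.inl h'), Or.inl h', Or.inr (Or.inr h')])]
  · rw [if_neg h, if_neg (fun hh => h (by
      rcases hh with h' | h' | h'
      exacts [Or.inr (Or.inl h'), Or.inl h', Or.inr (Or.inr h')]))]
end
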